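/- Let ṽ : [t₀, ∞) × ℝ → ℝ be continuous, bounded in space, continuously differentiable in t, negative everywhere, and satisfy ṽ_t ≤ J ∗ ṽ where J is a nonnegative integrable kernel with ∫_ℝ J = 1. Then for every T > 0 and every natural number N ≥ 1, ṽ(t₀ + N·T, x) < T^N · [J^{∗N} ∗ ṽ(t₀, ·)](x) for all x ∈ ℝ, where J^{∗N} denotes the N-fold convolution of J with itself. -/

import Mathlib

open Real MeasureTheory Filter
open scoped Convolution

/-- `convPow J n` is the `(n+1)`-fold convolution power of `J`,
so that `convPow J 0 = J` corresponds to `J^{∗1}` and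
`convPow J (N-1)` corresponds to `J^{∗N}`. -/
noncomputable def convPow (J : ℝ → ℝ) : ℕ → ℝ → ℝ
  | 0 => J
  | n + 1 => fun x => ∫ y, J (x - y) * convPow J n y

lemma conv_eq (K w : ℝ → ℝ) (x : ℝ) :
    (K ⋆[ContinuousLinearMap.mul ℝ ℝ, volume] w) x = ∫ y, K (x - y) * w y := by
  rw [convolution_def,
    ← integral_sub_left_eq_self (fun y => K (x - y) * w y) volume x]
  simp [sub_sub_cancel]

lemma convPow_succ_eq (J : ℝ → ℝ) (n : ℕ) :
    convPow J (n + 1) = J ⋆[ContinuousLinearMap.mul ℝ ℝ, volume] convPow J n := by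
  funext x; rw [conv_eq]; rfl

lemma convPow_integrable (J : ℝ → ℝ) (hJ : Integrable J) (n : ℕ) :
    Integrable (convPow J n) := by
  induction n with
  | zero => exact hJ
  | succ n ih => rw [convPow_succ_eq]; exact hJ.integrable_convolution _ ih

lemma convPow_nonneg (J : ℝ → ℝ) (hJ : ∀ x, 0 ≤ J x) (n : ℕ) (x : ℝ) :
    0 ≤ convPow J n x := by
  induction n generalizing x with
  | zero => exact hJ x
  | succ n ih =>
    exact integral_nonneg fun y => mul_nonneg (hJ _) (ih _)

/-- integrable kernel against a bounded measurable function -/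
lemma kernel_mul_integrable {K w : ℝ → ℝ} (hK : Integrable K)
    (hw : AEStronglyMeasurable w volume) {C : ℝ} (hC : ∀ y, |w y| ≤ C) (x : ℝ) :
    Integrable (fun y => K (x - y) * w y) := by
  have h := (hK.comp_sub_left x).bdd_mul hw (c := C)
    (Eventually.of_forall (by simpa [Real.norm_eq_abs] using hC))
  simpa [mul_comm] using h

/-- the key Fubini step -/
lemma fubini_step (J : ℝ → ℝ) (hJ : Integrable J) {K w : ℝ → ℝ} (hK : Integrable K)
    (hw : AEStronglyMeasurable w volume) {C : ℝ} (hC : ∀ y, |w y| ≤ C) (x : ℝ) :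
    ∫ y, J (x - y) * ∫ z, K (y - z) * w z = ∫ z, (∫ u, J (x - z - u) * K u) * w z := by
  have hmp : MeasurePreserving (fun p : ℝ × ℝ => (p.1, p.1 - p.2))
      ((volume : Measure ℝ).prod volume) ((volume : Measure ℝ).prod volume) := by
    have h1 := measurePreserving_prod_sub (volume : Measure ℝ) volume
    have h2 : MeasurePreserving (fun p : ℝ × ℝ => (p.1, -p.2))
        ((volume : Measure ℝ).prod volume) ((volume : Measure ℝ).prod volume) :=
      (MeasurePreserving.id _).prod (Measure.measurePreserving_neg _)
    have h3 := h2.comp h1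
    have he : ((fun p : ℝ × ℝ => (p.1, -p.2)) ∘ fun z : ℝ × ℝ => (z.1, z.2 - z.1))
        = fun p : ℝ × ℝ => (p.1, p.1 - p.2) := by
      funext p; simp [Function.comp, neg_sub]
    rwa [he] at h3
  have h1 : Integrable (fun p : ℝ × ℝ => J (x - p.1) * K (p.1 - p.2))
      ((volume : Measure ℝ).prod volume) := by
    have h0 : Integrable (fun p : ℝ × ℝ => J (x - p.1) * K p.2)
        ((volume : Measure ℝ).prod volume) := (hJ.comp_sub_left x).mul_prod hK
    exact (hmp.integrable_comp h0.aestronglyMeasurable).mpr h0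
  have hF : Integrable (fun p : ℝ × ℝ => J (x - p.1) * (K (p.1 - p.2) * w p.2))
      ((volume : Measure ℝ).prod volume) := by
    have h := h1.bdd_mul
      (hw.comp_quasiMeasurePreserving Measure.quasiMeasurePreserving_snd :
        AEStronglyMeasurable (fun p : ℝ × ℝ => w p.2) _) (c := C)
      (Eventually.of_forall (by simpa [Real.norm_eq_abs] using fun p : ℝ × ℝ => hC p.2))
    simpa [mul_comm, mul_assoc, mul_left_comm] using h
  calc ∫ y, J (x - y) * ∫ z, K (y - z) * w z
      = ∫ y, ∫ z, J (x - y) * (K (y - z) * w z) := by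
        simp_rw [integral_const_mul]
    _ = ∫ z, ∫ y, J (x - y) * (K (y - z) * w z) := integral_integral_swap hF
    _ = ∫ z, (∫ y, J (x - y) * K (y - z)) * w z := by
        congr 1; funext z
        rw [← integral_mul_const]; congr 1; funext y; ring
    _ = ∫ z, (∫ u, J (x - z - u) * K u) * w z := by
        congr 1; funext z
        congr 1
        rw [← integral_sub_right_eq_self (fun u => J (x - z - u) * K u) z]
        congr 1; funext y
        ring_nf

theorem stmt5 (t₀ : ℝ) (J : ℝ → ℝ) (v vt : ℝ → ℝ → ℝ)
    (hJnn : ∀ x, 0 ≤ J x) (hJint : Integrable J) (hJ1 : (∫ x, J x) = 1)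
    (hcont : Continuous fun p : ℝ × ℝ => v p.1 p.2)
    (hbdd : ∀ t, ∃ C, ∀ x, |v t x| ≤ C)
    (hderiv : ∀ x t, t₀ ≤ t → HasDerivAt (fun s => v s x) (vt t x) t)
    (hvtcont : ∀ x, Continuous fun t => vt t x)
    (hneg : ∀ t x, t₀ ≤ t → v t x < 0)
    (hineq : ∀ t x, t₀ ≤ t → vt t x ≤ ∫ y, J (x - y) * v t y) :
    ∀ T > 0, ∀ N : ℕ, 1 ≤ N → ∀ x : ℝ,
      v (t₀ + N * T) x < T ^ N * ∫ y, convPow J (N - 1) (x - y) * v t₀ y := by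
  intro T hT N hN
  -- space-continuity of v t
  have hvx : ∀ t, Continuous fun x => v t x := fun t =>
    hcont.comp (continuous_const.prodMk continuous_id)
  have hvt : ∀ x, Continuous fun t => v t x := fun x =>
    hcont.comp (continuous_id.prodMk continuous_const)
  -- antitone in time
  have hanti : ∀ x, AntitoneOn (fun t => v t x) (Set.Ici t₀) := by
    intro x
    refine antitoneOn_of_deriv_nonpos (convex_Ici t₀) ((hvt x).continuousOn) ?_ ?_
    · intro s hs
      rw [interior_Ici] at hs
      exact (hderiv x s hs.le).differentiableAt.differentiableWithinAt
    · intro s hs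
      rw [interior_Ici] at hs
      rw [(hderiv x s hs.le).deriv]
      refine (hineq s x hs.le).trans ?_
      exact integral_nonpos fun y =>
        mul_nonpos_iff.2 (Or.inl ⟨hJnn _, (hneg s y hs.le).le⟩)
  -- single step
  have hstep : ∀ t, t₀ ≤ t → ∀ x, v (t + T) x < T * ∫ y, J (x - y) * v t y := by
    intro t ht x
    obtain ⟨Ct, hCt⟩ := hbdd t
    have hA : Integrable (fun y => J (x - y) * v t y) :=
      kernel_mul_integrable hJint ((hvx t).aestronglyMeasurable) hCt x
    have hFTC : ∫ s in t..(t + T), vt s x = v (t + T) x - v t x := by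
      refine intervalIntegral.integral_eq_sub_of_hasDerivAt
        (f := fun s => v s x) (a := t) (b := t + T) (fun s hs => ?_)
        ((hvtcont x).intervalIntegrable _ _)
      rw [Set.uIcc_of_le (by linarith)] at hs
      exact hderiv x s (ht.trans hs.1)
    have hb : ∀ s ∈ Set.Icc t (t + T), vt s x ≤ ∫ y, J (x - y) * v t y := by
      intro s hs
      obtain ⟨Cs, hCs⟩ := hbdd s
      refine (hineq s x (ht.trans hs.1)).trans ?_
      refine integral_mono
        (kernel_mul_integrable hJint ((hvx s).aestronglyMeasurable) hCs x) hA
        fun y => ?_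
      exact mul_le_mul_of_nonneg_left
        (hanti y ht (ht.trans hs.1) hs.1) (hJnn _)
    have hmono : ∫ s in t..(t + T), vt s x ≤ T * ∫ y, J (x - y) * v t y := by
      calc ∫ s in t..(t + T), vt s x
          ≤ ∫ _s in t..(t + T), (∫ y, J (x - y) * v t y) :=
            intervalIntegral.integral_mono_on (by linarith)
              ((hvtcont x).intervalIntegrable _ _) intervalIntegrable_const hb
        _ = T * ∫ y, J (x - y) * v t y := by
            simp [intervalIntegral.integral_const]
    have := hneg t x ht
    linarith [hFTC ▸ hmono]
  -- bounded continuous inner convolution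
  have hw : ∀ (n : ℕ) (t : ℝ), ∃ C, 0 ≤ C ∧
      (∀ y, |∫ z, convPow J n (y - z) * v t z| ≤ C) ∧
      Continuous (fun y => ∫ z, convPow J n (y - z) * v t z) := by
    intro n t
    obtain ⟨C, hC⟩ := hbdd t
    have hC0 : 0 ≤ C := (abs_nonneg _).trans (hC 0)
    have hKi := convPow_integrable J hJint n
    have hKnn := convPow_nonneg J hJnn n
    set IK := ∫ z, convPow J n z with hIK
    have hIK0 : 0 ≤ IK := integral_nonneg hKnn
    refine ⟨C * IK, by positivity, fun y => ?_, ?_⟩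
    · have hi : Integrable (fun z => convPow J n (y - z) * v t z) :=
        kernel_mul_integrable hKi ((hvx t).aestronglyMeasurable) hC y
      have hI : ∫ z, convPow J n (y - z) * C = C * IK := by
        rw [integral_mul_const, integral_sub_left_eq_self (convPow J n) volume y]
        ring
      rw [abs_le]
      constructor
      · rw [neg_le]
        have : ∫ z, -(convPow J n (y - z) * v t z) ≤ ∫ z, convPow J n (y - z) * C := by
          refine integral_mono hi.neg ((hKi.comp_sub_left y).mul_const C) fun z => ?_
          rw [neg_mul_eq_mul_neg]
          exact mul_le_mul_of_nonneg_left
            ((neg_le_abs _).trans (hC z)) (hKnn _)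
        rw [integral_neg] at this
        linarith [hI ▸ this]
      · have : ∫ z, convPow J n (y - z) * v t z ≤ ∫ z, convPow J n (y - z) * C := by
          refine integral_mono hi ((hKi.comp_sub_left y).mul_const C) fun z => ?_
          exact mul_le_mul_of_nonneg_left ((le_abs_self _).trans (hC z)) (hKnn _)
        linarith [hI ▸ this]
    · have he : (fun y => ∫ z, convPow J n (y - z) * v t z)
          = (convPow J n ⋆[ContinuousLinearMap.mul ℝ ℝ, volume] (v t)) := by
        funext y; rw [conv_eq]
      rw [he]
      refine BddAbove.continuous_convolution_right_of_integrable _ ?_ hKi (hvx t)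
      refine ⟨C, ?_⟩
      rintro - ⟨z, rfl⟩
      simpa [Real.norm_eq_abs] using hC z
  -- main induction
  have main : ∀ n : ℕ, ∀ t, t₀ ≤ t → ∀ x,
      v (t + ((n : ℝ) + 1) * T) x < T ^ (n + 1) * ∫ y, convPow J n (x - y) * v t y := by
    intro n
    induction n with
    | zero =>
      intro t ht x
      simpa [convPow] using hstep t ht x
    | succ n ih =>
      intro t ht x
      have hs0 : t₀ ≤ t + ((n : ℝ) + 1) * T := by
        have : (0:ℝ) ≤ ((n : ℝ) + 1) * T := by positivity
        linarith
      set s := t + ((n : ℝ) + 1) * T with hs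
      obtain ⟨Cs, hCs⟩ := hbdd s
      obtain ⟨Cw, hCw0, hCwb, hCwc⟩ := hw n t
      set w : ℝ → ℝ := fun y => ∫ z, convPow J n (y - z) * v t z with hwdef
      set w' : ℝ → ℝ := fun y => T ^ (n + 1) * w y with hw'def
      have hw'c : Continuous w' := continuous_const.mul hCwc
      have hw'b : ∀ y, |w' y| ≤ T ^ (n + 1) * Cw := by
        intro y
        rw [hw'def, abs_mul, abs_of_nonneg (by positivity : (0:ℝ) ≤ T ^ (n+1))]
        exact mul_le_mul_of_nonneg_left (hCwb y) (by positivity)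
      -- step at the far end
      have h1 : v (s + T) x < T * ∫ y, J (x - y) * v s y := hstep s hs0 x
      -- bound the inner v s by the induction hypothesis
      have h2 : ∫ y, J (x - y) * v s y ≤ ∫ y, J (x - y) * w' y := by
        refine integral_mono
          (kernel_mul_integrable hJint ((hvx s).aestronglyMeasurable) hCs x)
          (kernel_mul_integrable hJint hw'c.aestronglyMeasurable hw'b x)
          fun y => ?_
        exact mul_le_mul_of_nonneg_left (ih t ht y).le (hJnn _)
      -- Fubini
      have h3 : ∫ y, J (x - y) * w y = ∫ z, convPow J (n + 1) (x - z) * v t z := by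
        obtain ⟨C, hC⟩ := hbdd t
        have := fubini_step J hJint (convPow_integrable J hJint n)
          ((hvx t).aestronglyMeasurable) hC x
        rw [hwdef]
        rw [this]
        simp only [convPow]
      have h4 : ∫ y, J (x - y) * w' y = T ^ (n + 1) * ∫ z, convPow J (n + 1) (x - z) * v t z := by
        rw [← h3, ← integral_const_mul]
        congr 1; funext y; rw [hw'def]; ring
      have hse : t + ((↑(n + 1) : ℝ) + 1) * T = s + T := by rw [hs, Nat.cast_add, Nat.cast_one]; ring
      have hpow : T ^ (n + 1 + 1) = T * T ^ (n + 1) := by ring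
      rw [hse, hpow]
      calc v (s + T) x < T * ∫ y, J (x - y) * v s y := h1
        _ ≤ T * ∫ y, J (x - y) * w' y := by nlinarith [h2]
        _ = T * T ^ (n + 1) * ∫ z, convPow J (n + 1) (x - z) * v t z := by rw [h4]; ring
        _ = T * T ^ (n + 1) * ∫ y, convPow J (n + 1) (x - y) * v t y := rfl
  -- conclude
  intro x
  have h := main (N - 1) t₀ le_rfl x
  have hN1 : ((N - 1 : ℕ) : ℝ) + 1 = (N : ℝ) := by
    exact_mod_cast congrArg (Nat.cast : ℕ → ℝ) (Nat.sub_add_cancel hN)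
  rw [hN1, Nat.sub_add_cancel hN] at h
  exact h
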